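/- Let δ be a chain of n-torsion classes in the n-cluster-tilting subcategory M of the abelian length category A, and let T(δ) = {T(U_s)} be the induced chain of torsion classes of A. For any object X of M, the n-Harder-Narasimhan filtration of X with respect to δ (inside M) coincides, term by term up to isomorphism and with equal length, with the Harder-Narasimhan filtration of X with respect to T(δ) (inside A). -/
import Mathlib


open CategoryTheory CategoryTheory.Limits

universe w v u u' v' uG

set_option linter.dupNamespace false

namespace TorsionPaper

variable (A : Type u) [Category.{v} A] [Abelian A]
/-- `0 → X → Y → Z → 0` is a short exact sequence. -/
def SES {X Y Z : A} (f : X ⟶ Y) (g : Y ⟶ Z) : Prop :=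
  ∃ h : f ≫ g = 0, (ShortComplex.mk f g h).ShortExact

/-- Exactness at the middle object of `X → Y → Z`. -/
def IsExactAt {X Y Z : A} (f : X ⟶ Y) (g : Y ⟶ Z) : Prop :=
  ∃ h : f ≫ g = 0, (ShortComplex.mk f g h).Exact

/-- A class of objects closed under quotient objects. -/
def ClosedUnderQuotients (T : Set A) : Prop :=
  ∀ ⦃X Y : A⦄ (p : X ⟶ Y), Epi p → X ∈ T → Y ∈ T

/-- A class of objects closed under extensions. -/
def ClosedUnderExtensions (T : Set A) : Prop :=
  ∀ ⦃X Y Z : A⦄ (f : X ⟶ Y) (g : Y ⟶ Z), SES A f g → X ∈ T → Z ∈ T → Y ∈ T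

/-- Torsion classes: full subcategories closed under quotients and extensions. -/
def IsTorsionClass (T : Set A) : Prop :=
  ClosedUnderQuotients A T ∧ ClosedUnderExtensions A T

/-- The right Hom-perpendicular class of a class of objects. -/
def rperp (T : Set A) : Set A := {Y | ∀ X ∈ T, ∀ f : X ⟶ Y, f = 0}

/-- `(T, F)` is a torsion pair: no nonzero maps from `T` to `F`, and every object has
a short exact sequence with torsion subobject in `T` and torsion-free quotient in `F`. -/
def IsTorsionPair (T F : Set A) : Prop :=
  (∀ X ∈ T, ∀ Y ∈ F, ∀ f : X ⟶ Y, f = 0) ∧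
  ∀ M : A, ∃ (tM fM : A) (i : tM ⟶ M) (p : M ⟶ fM),
    tM ∈ T ∧ fM ∈ F ∧ SES A i p

/-- Quotients of objects of `X`. -/
def Fac (X : Set A) : Set A := {Y | ∃ Z ∈ X, ∃ p : Z ⟶ Y, Epi p}

/-- Subobjects of objects of `X`. -/
def SubOf (X : Set A) : Set A := {Y | ∃ Z ∈ X, ∃ i : Y ⟶ Z, Mono i}

/-- Objects admitting a finite filtration with successive quotients in `Y`. -/
def Filt (Y : Set A) : Set A :=
  {M | ∃ (nn : ℕ) (obj : ℕ → A) (map : ∀ i, obj i ⟶ obj (i + 1)),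
    IsZero (obj 0) ∧ obj nn = M ∧
    ∀ i, i < nn → ∃ (Q : A) (p : obj (i + 1) ⟶ Q), Q ∈ Y ∧ SES A (map i) p}

/-- The minimal torsion class containing a class `X` of objects. -/
def TT (X : Set A) : Set A := ⋂₀ {T : Set A | IsTorsionClass A T ∧ X ⊆ T}

/-- `A` is a length category: every object has a well-founded subobject lattice
in both directions. -/
def IsLengthCategory : Prop :=
  ∀ X : A, WellFoundedLT (Subobject X) ∧ WellFoundedGT (Subobject X)

/-- The set of torsion subobjects (with respect to the torsion class `T`)
of objects of `MM`; this is the class `tMM = {tM : M ∈ MM}`. -/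
def torsObjs (T MM : Set A) : Set A :=
  {Y | ∃ (X : A) (_ : X ∈ MM) (i : Y ⟶ X) (F : A) (p : X ⟶ F),
    Y ∈ T ∧ F ∈ rperp A T ∧ SES A i p}

/-- The set of torsion-free quotients (with respect to the torsion class `T`)
of objects of `MM`; this is the class `fMM = {coker (tM ↪ M) : M ∈ MM}`. -/
def freeQuots (T MM : Set A) : Set A :=
  {F | ∃ (X : A) (_ : X ∈ MM) (Y : A) (i : Y ⟶ X) (p : X ⟶ F),
    Y ∈ T ∧ F ∈ rperp A T ∧ SES A i p}

/-- Contravariantly finite subcategory: every object has a right approximation. -/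
def ContravariantlyFinite (X : Set A) : Prop :=
  ∀ C : A, ∃ (M : A) (_ : M ∈ X) (π : M ⟶ C),
    ∀ M' : A, M' ∈ X → ∀ π' : M' ⟶ C, ∃ f : M' ⟶ M, f ≫ π = π'

/-- Covariantly finite subcategory: every object has a left approximation. -/
def CovariantlyFinite (X : Set A) : Prop :=
  ∀ C : A, ∃ (M : A) (_ : M ∈ X) (ι : C ⟶ M),
    ∀ M' : A, M' ∈ X → ∀ ι' : C ⟶ M', ∃ f : M ⟶ M', ι ≫ f = ι'

/-- Functorially finite subcategory. -/
def FunctoriallyFinite (X : Set A) : Prop :=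
  ContravariantlyFinite A X ∧ CovariantlyFinite A X

/-- The union `⋃_{r > s} δ r`. -/
def unionGT (δ : unitInterval → Set A) (s : unitInterval) : Set A :=
  ⋃ (r : unitInterval) (_ : s < r), δ r

/-- The union `⋃_{r > s} δ r`, with the convention that it contains the zero
objects (so that at `s = 1` it is `{0}`). -/
def unionGTc (δ : unitInterval → Set A) (s : unitInterval) : Set A :=
  {Z : A | IsZero Z} ∪ unionGT A δ s

/-- The intersection `⋂_{r < s} δ r`. -/
def interLT (δ : unitInterval → Set A) (s : unitInterval) : Set A :=
  ⋂ (r : unitInterval) (_ : r < s), δ r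

/-- The intersection `⋂_{r < s} δ r` with the convention that at `s = 0` it is `MM`. -/
def interLTc (MM : Set A) (δ : unitInterval → Set A) (s : unitInterval) : Set A :=
  MM ∩ interLT A δ s

/-- A chain of torsion classes indexed by `[0,1]`: `T_0 = A`, `T_1 = {0}`,
order-reversing. -/
def IsChainOfTorsionClasses (η : unitInterval → Set A) : Prop :=
  (∀ s, IsTorsionClass A (η s)) ∧ η 0 = Set.univ ∧ η 1 = {Z : A | IsZero Z} ∧
  ∀ r s : unitInterval, r ≤ s → η s ⊆ η r

/-- The slice `P_t` of a chain of torsion classes `η`: torsion-free quotients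
(with respect to the torsion class `⋃_{s>t} η s`) of the objects of
`S_t = (⋂_{s<t} η s) \ (⋃_{s>t} η s)`. -/
def sliceP (η : unitInterval → Set A) (t : unitInterval) : Set A :=
  {Q | ∃ (M tM : A) (ι : tM ⟶ M) (p : M ⟶ Q),
    M ∈ interLT A η t ∧ M ∉ unionGTc A η t ∧
    tM ∈ unionGTc A η t ∧ Q ∈ rperp A (unionGTc A η t) ∧ SES A ι p}

/-- `(r, obj, map, t)` is a Harder-Narasimhan filtration of `X` with respect to the
chain of torsion classes `η`: a filtration `0 = obj 0 ⊆ obj 1 ⊆ ... ⊆ obj r = X` whose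
successive quotients lie in the slices `P_{t i}` with `t` strictly decreasing. -/
def IsHNFiltration (η : unitInterval → Set A) (X : A)
    (r : ℕ) (obj : ℕ → A) (map : ∀ i, obj i ⟶ obj (i + 1)) (t : ℕ → unitInterval) : Prop :=
  IsZero (obj 0) ∧ obj r = X ∧
  (∀ i j, i < j → j < r → t j < t i) ∧
  ∀ i, i < r → ∃ (Q : A) (p : obj (i + 1) ⟶ Q), Q ∈ sliceP A η (t i) ∧ SES A (map i) p


/-- A sequence of objects and morphisms `obj 0 → obj 1 → obj 2 → ⋯` in `A`. -/
structure Seq where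
  obj : ℕ → A
  map : ∀ i, obj i ⟶ obj (i + 1)

variable {A}

/-- Exactness of the induced complex
`0 → Hom(U', V^1) → Hom(U', V^2) → ⋯ → Hom(U', V^n) → 0`, where
`V^i = S.obj (i + 2)` for `1 ≤ i ≤ n`. -/
def HomSeqExact (U' : A) (S : Seq A) (n : ℕ) : Prop :=
  ∀ i, 1 ≤ i → i ≤ n →
    ∀ f : U' ⟶ S.obj (i + 2),
      (i < n → f ≫ S.map (i + 2) = 0) →
      (if i = 1 then f = 0 else ∃ g : U' ⟶ S.obj (i + 1), g ≫ S.map (i + 1) = f)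

variable (A)

/-- `S` encodes the fundamental `n`-exact sequence
`0 → U^X → X → V^1 → ⋯ → V^n → 0` of `X` with respect to `U`:
here `S.obj 0` and `S.obj (n+3)` are zero, `S.obj 1 = U^X ∈ U`, `S.obj 2 = X`,
`S.obj (i+2) = V^i ∈ MM`, the sequence is exact (as a sequence in the ambient
abelian category, all of whose terms lie in the `n`-cluster-tilting subcategory `MM`),
and `0 → Hom(U', V^1) → ⋯ → Hom(U', V^n) → 0` is exact for every `U' ∈ U`. -/
def IsNTorsionSequenceFor (n : ℕ) (MM U : Set A) (X : A) (S : Seq A) : Prop :=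
  IsZero (S.obj 0) ∧ IsZero (S.obj (n + 3)) ∧
  S.obj 1 ∈ U ∧ S.obj 2 = X ∧
  (∀ i, 3 ≤ i → i ≤ n + 2 → S.obj i ∈ MM) ∧
  (∀ i, i ≤ n + 1 → IsExactAt A (S.map i) (S.map (i + 1))) ∧
  (∀ U' ∈ U, HomSeqExact U' S n)

/-- `U` is an `n`-torsion class in the `n`-cluster-tilting subcategory `MM`
(Jørgensen's definition): every `X ∈ MM` admits a fundamental `n`-exact sequence. -/
def IsNTorsionClass (n : ℕ) (MM U : Set A) : Prop :=
  U ⊆ MM ∧ ∀ X ∈ MM, ∃ S : Seq A, IsNTorsionSequenceFor A n MM U X S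

/-- `ι : UX ⟶ X` exhibits `UX` as the `n`-torsion subobject of `X` with respect to
the `n`-torsion class `U`. -/
def IsNTorsionSubobject (n : ℕ) (MM U : Set A) (X UX : A) (ι : UX ⟶ X) : Prop :=
  ∃ (S : Seq A) (h1 : S.obj 1 = UX) (h2 : S.obj 2 = X),
    IsNTorsionSequenceFor A n MM U X S ∧
    eqToHom h1.symm ≫ S.map 1 ≫ eqToHom h2 = ι

/-- `MM` is generating: every object is a quotient of an object of `MM`. -/
def Generating (MM : Set A) : Prop := Fac A MM = Set.univ

/-- `MM` is cogenerating: every object is a subobject of an object of `MM`. -/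
def Cogenerating (MM : Set A) : Prop := SubOf A MM = Set.univ

/-- `MM` is an `n`-cluster-tilting subcategory of the abelian category `A`:
functorially finite, generating-cogenerating, and given by the vanishing of
`Ext^i` for `1 ≤ i ≤ n - 1` on either side. -/
def IsNClusterTilting [HasExt.{w} A] (n : ℕ) (MM : Set A) : Prop :=
  FunctoriallyFinite A MM ∧ Generating A MM ∧ Cogenerating A MM ∧
  (∀ X : A, X ∈ MM ↔ ∀ Y ∈ MM, ∀ i, 1 ≤ i → i ≤ n - 1 → Subsingleton (Abelian.Ext X Y i)) ∧
  (∀ Y : A, Y ∈ MM ↔ ∀ X ∈ MM, ∀ i, 1 ≤ i → i ≤ n - 1 → Subsingleton (Abelian.Ext X Y i))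

/-- A chain of `n`-torsion classes in `MM` indexed by `[0,1]`:
`U_0 = MM`, `U_1 = {0}`, order-reversing. -/
def IsChainOfNTorsionClasses (n : ℕ) (MM : Set A) (δ : unitInterval → Set A) : Prop :=
  (∀ s, IsNTorsionClass A n MM (δ s)) ∧ δ 0 = MM ∧ δ 1 = {Z : A | IsZero Z} ∧
  ∀ r s : unitInterval, r ≤ s → δ s ⊆ δ r

/-- `(r, obj, map, t)` is an `n`-Harder-Narasimhan filtration of `X` with respect to
the chain of `n`-torsion classes `δ`: a strict filtration
`0 = obj 0 ⊊ obj 1 ⊊ ⋯ ⊊ obj r = X` with strictly decreasing parameters `t i` such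
that `obj (i+1)` lies in `(⋂_{s < t i} U_s) \ (⋃_{s > t i} U_s)` and `obj i` is the
`n`-torsion subobject of `obj (i+1)` with respect to `⋃_{s > t i} U_s`; in particular
the `n`-cokernel of `obj i → obj (i+1)` lies in the slice `Q_{t i}`. -/
def IsNHNFiltration (n : ℕ) (MM : Set A) (δ : unitInterval → Set A) (X : A)
    (r : ℕ) (obj : ℕ → A) (map : ∀ i, obj i ⟶ obj (i + 1)) (t : ℕ → unitInterval) : Prop :=
  IsZero (obj 0) ∧ obj r = X ∧
  (∀ i j, i < j → j < r → t j < t i) ∧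
  ∀ i, i < r →
    obj (i + 1) ∈ interLTc A MM δ (t i) ∧ obj (i + 1) ∉ unionGTc A δ (t i) ∧
    ¬ IsIso (map i) ∧
    IsNTorsionSubobject A n MM (unionGTc A δ (t i)) (obj (i + 1)) (obj i) (map i)

section AuxProof

variable {A}

open Category

/-! ### Basic lemmas about `SES` -/

lemma SES.mono_f' {X Y Z : A} {f : X ⟶ Y} {g : Y ⟶ Z} (h : SES A f g) : Mono f := by
  obtain ⟨w, hw⟩ := h; exact hw.mono_f

lemma SES.epi_g' {X Y Z : A} {f : X ⟶ Y} {g : Y ⟶ Z} (h : SES A f g) : Epi g := by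
  obtain ⟨w, hw⟩ := h; exact hw.epi_g

lemma SES.lift' {X Y Z W : A} {f : X ⟶ Y} {g : Y ⟶ Z} (h : SES A f g)
    (k : W ⟶ Y) (hk : k ≫ g = 0) : ∃ u : W ⟶ X, u ≫ f = k := by
  obtain ⟨w, hw⟩ := h
  haveI := hw.mono_f
  exact ⟨hw.exact.lift k hk, hw.exact.lift_f k hk⟩

lemma SES.desc' {X Y Z W : A} {f : X ⟶ Y} {g : Y ⟶ Z} (h : SES A f g)
    (k : Y ⟶ W) (hk : f ≫ k = 0) : ∃ u : Z ⟶ W, g ≫ u = k := by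
  obtain ⟨w, hw⟩ := h
  haveI := hw.epi_g
  exact ⟨hw.exact.desc k hk, hw.exact.g_desc k hk⟩

lemma SES.isIso_of_isZero {X Y Z : A} {f : X ⟶ Y} {g : Y ⟶ Z} (h : SES A f g)
    (hZ : IsZero Z) : IsIso f := by
  obtain ⟨w, hw⟩ := h
  haveI := hw.mono_f
  haveI : Epi f := hw.exact.epi_f (hZ.eq_of_tgt _ _)
  exact isIso_of_mono_of_epi f

lemma SES.of_iso {X X' Y Y' Z : A} {f : X ⟶ Y} {p : Y ⟶ Z} (h : SES A f p)
    (α : X' ≅ X) (β : Y ≅ Y') : SES A (α.hom ≫ f ≫ β.hom) (β.inv ≫ p) := by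
  obtain ⟨w, hw⟩ := h
  have hw0 : (α.hom ≫ f ≫ β.hom) ≫ (β.inv ≫ p) = 0 := by
    simp [reassoc_of% w, w]
  refine ⟨hw0, ?_⟩
  refine ShortComplex.shortExact_of_iso
    (S₁ := ShortComplex.mk f p w) (S₂ := ShortComplex.mk _ _ hw0) ?_ hw
  exact ShortComplex.isoMk α.symm β (Iso.refl Z) (by simp) (by simp)

lemma SES.cokernel' {X Y : A} (f : X ⟶ Y) [Mono f] : SES A f (cokernel.π f) := by
  refine ⟨cokernel.condition f, ?_⟩
  exact { exact := ShortComplex.exact_of_g_is_cokernel _ (cokernelIsCokernel f) }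

lemma isZero_of_epi_of_isZero {Y Z : A} (p : Y ⟶ Z) [Epi p] (hY : IsZero Y) : IsZero Z :=
  IsZero.of_epi_eq_zero p (hY.eq_of_src _ _)

/-! ### Basic lemmas about torsion classes and `TT` -/

lemma TT_isTorsionClass (X0 : Set A) : IsTorsionClass A (TT A X0) := by
  constructor
  · intro X Y p hp hX T hT
    exact hT.1.1 p hp (hX T hT)
  · intro X Y Z f g hses hX hZ T hT
    exact hT.1.2 f g hses (hX T hT) (hZ T hT)

lemma TT_subset (X0 : Set A) : X0 ⊆ TT A X0 := by
  intro x hx T hT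
  exact hT.2 hx

lemma TT_min {X0 T : Set A} (hT : IsTorsionClass A T) (hsub : X0 ⊆ T) : TT A X0 ⊆ T := by
  intro x hx
  exact hx T ⟨hT, hsub⟩

lemma homClass_isTorsionClass (Q : A) : IsTorsionClass A {T : A | ∀ f : T ⟶ Q, f = 0} := by
  constructor
  · intro X Y p hp hX f
    have h0 : p ≫ f = 0 := hX _
    exact zero_of_epi_comp p h0
  · intro X Y Z f g hses hX hZ h
    obtain ⟨u, hu⟩ := hses.desc' h (hX _)
    rw [← hu, hZ u, comp_zero]

lemma mem_TT_hom_zero {X0 : Set A} {Q : A} (h : ∀ U' ∈ X0, ∀ f : U' ⟶ Q, f = 0)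
    {T : A} (hT : T ∈ TT A X0) : ∀ f : T ⟶ Q, f = 0 :=
  TT_min (homClass_isTorsionClass Q) (fun U hU => h U hU) hT

lemma zero_mem_of_nonempty {T : Set A} (hT : IsTorsionClass A T) {W : A} (hW : W ∈ T)
    {Z : A} (hZ : IsZero Z) : Z ∈ T := by
  haveI : Epi (0 : W ⟶ Z) := ⟨fun u v _ => hZ.eq_of_src u v⟩
  exact hT.1 (0 : W ⟶ Z) inferInstance hW

/-! ### Lemmas about `unionGTc` -/

lemma unionGTc_subset_TT {δ : unitInterval → Set A} {s : unitInterval} :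
    unionGTc A δ s ⊆ unionGTc A (fun u => TT A (δ u)) s := by
  intro x hx
  rcases (Set.mem_union _ _ _).1 hx with h0 | hu
  · exact (Set.mem_union _ _ _).2 (Or.inl h0)
  · obtain ⟨r, hr, hxr⟩ := Set.mem_iUnion₂.1 hu
    exact (Set.mem_union _ _ _).2 (Or.inr (Set.mem_iUnion₂.2 ⟨r, hr, TT_subset _ hxr⟩))

lemma rperp_unionGTc_TT {δ : unitInterval → Set A} {s : unitInterval} {Q : A}
    (h : ∀ U' ∈ unionGTc A δ s, ∀ f : U' ⟶ Q, f = 0) :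
    Q ∈ rperp A (unionGTc A (fun u => TT A (δ u)) s) := by
  intro T hT f
  rcases (Set.mem_union _ _ _).1 hT with h0 | hu
  · exact h0.eq_of_src f 0
  · obtain ⟨r, hr, hTr⟩ := Set.mem_iUnion₂.1 hu
    exact mem_TT_hom_zero
      (fun U hU g => h U ((Set.mem_union _ _ _).2 (Or.inr (Set.mem_iUnion₂.2 ⟨r, hr, hU⟩))) g) hTr f

end AuxProof
section AuxProof2

variable {A}

open Category

/-! ### From an `n`-torsion subobject to a short exact sequence with
torsion-free quotient -/

lemma bridge_step {n : ℕ} (hn : 1 ≤ n) {MM U : Set A}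
    {X Y : A} {ι : Y ⟶ X} (hsub : IsNTorsionSubobject A n MM U X Y ι) :
    ∃ (Q : A) (p : X ⟶ Q), SES A ι p ∧ (∀ U' ∈ U, ∀ f : U' ⟶ Q, f = 0) := by
  obtain ⟨S, h1, h2, hfund, hcomp⟩ := hsub
  obtain ⟨hz0, hzlast, hU1, hX2, hMM, hexact, hhom⟩ := hfund
  -- `S.map 1` is a monomorphism
  obtain ⟨w0, hex0⟩ := hexact 0 (by omega)
  haveI hm1 : Mono (S.map 1) := hex0.mono_g (hz0.eq_of_src _ _)
  obtain ⟨w1, hex1⟩ := hexact 1 (by omega)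
  obtain ⟨w2, hex2⟩ := hexact 2 (by omega)
  set Q := cokernel (S.map 1) with hQdef
  set p : S.obj 2 ⟶ Q := cokernel.π _ with hpdef
  have hses : SES A (S.map 1) p := SES.cokernel' (S.map 1)
  -- the monomorphism `Q ⟶ S.obj 3`
  set ι' : Q ⟶ S.obj 3 := cokernel.desc (S.map 1) (S.map 2) w1 with hι'def
  haveI hmι : Mono ι' :=
    (ShortComplex.exact_iff_mono_cokernel_desc (ShortComplex.mk (S.map 1) (S.map 2) w1)).1 hex1
  have hπι : p ≫ ι' = S.map 2 := cokernel.π_desc _ _ _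
  have hι3 : ι' ≫ S.map 3 = 0 := by
    haveI := hses.epi_g'
    rw [← cancel_epi p, reassoc_of% hπι, w2, comp_zero]
  -- Hom-vanishing from `U`
  have hvan : ∀ U' ∈ U, ∀ g : U' ⟶ Q, g = 0 := by
    intro U' hU' g
    have h := hhom U' hU' 1 le_rfl hn (g ≫ ι')
      (fun _ => by rw [Category.assoc, hι3, comp_zero])
    rw [if_pos rfl] at h
    exact zero_of_comp_mono ι' h
  -- transport along the identifications `S.obj 1 = Y`, `S.obj 2 = X`
  have htr := hses.of_iso (eqToIso h1.symm) (eqToIso h2)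
  rw [show (eqToIso h1.symm).hom = eqToHom h1.symm from rfl,
    show (eqToIso h2).hom = eqToHom h2 from rfl, hcomp] at htr
  exact ⟨Q, (eqToIso h2).inv ≫ p, htr, hvan⟩

/-- An `n`-HN filtration with respect to `δ` is an HN filtration with respect to
the induced chain of torsion classes `T(δ)`. -/
lemma bridge {n : ℕ} (hn : 1 ≤ n) {MM : Set A} {δ : unitInterval → Set A}
    {X : A} {r : ℕ} {obj : ℕ → A} {map : ∀ i, obj i ⟶ obj (i + 1)} {t : ℕ → unitInterval}
    (h : IsNHNFiltration A n MM δ X r obj map t) :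
    IsHNFiltration A (fun s => TT A (δ s)) X r obj map t := by
  obtain ⟨hz, hr, hdec, hstep⟩ := h
  refine ⟨hz, hr, hdec, ?_⟩
  intro i hi
  obtain ⟨hmem, hnot, hniso, hsub⟩ := hstep i hi
  obtain ⟨Q, p, hses, hvan⟩ := bridge_step hn hsub
  refine ⟨Q, p, ?_, hses⟩
  have hrperp : Q ∈ rperp A (unionGTc A (fun s => TT A (δ s)) (t i)) :=
    rperp_unionGTc_TT hvan
  haveI hepi : Epi p := hses.epi_g'
  have hMnot : obj (i + 1) ∉ unionGTc A (fun s => TT A (δ s)) (t i) := by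
    intro hc
    rcases (Set.mem_union _ _ _).1 hc with hzz | huu
    · exact hnot ((Set.mem_union _ _ _).2 (Or.inl hzz))
    · obtain ⟨s, hs, hmemTT⟩ := Set.mem_iUnion₂.1 huu
      have hQT : Q ∈ TT A (δ s) := (TT_isTorsionClass _).1 p hepi hmemTT
      have hid : (𝟙 Q) = 0 :=
        mem_TT_hom_zero (fun U hU g =>
          hvan U ((Set.mem_union _ _ _).2 (Or.inr (Set.mem_iUnion₂.2 ⟨s, hs, hU⟩))) g)
          hQT (𝟙 Q)
      exact hniso (hses.isIso_of_isZero ((IsZero.iff_id_eq_zero Q).2 hid))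
  refine ⟨obj (i + 1), obj i, map i, p, ?_, hMnot, ?_, hrperp, hses⟩
  · -- `obj (i+1) ∈ interLT A (TT ∘ δ) (t i)`
    refine Set.mem_iInter₂.2 (fun s hs => ?_)
    exact TT_subset _ (Set.mem_iInter₂.1 hmem.2 s hs)
  · -- `obj i ∈ unionGTc A (TT ∘ δ) (t i)`
    obtain ⟨S, h1, h2, hfund, _⟩ := hsub
    have hU1 := hfund.2.2.1
    rw [h1] at hU1
    exact unionGTc_subset_TT hU1

end AuxProof2
section AuxProof3

variable {A}

open Category

/-! ### Uniqueness of Harder–Narasimhan filtrations -/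

lemma exists_between' {a b : unitInterval} (h : a < b) : ∃ c, a < c ∧ c < b :=
  exists_between h

lemma slice_quot_mem {η : unitInterval → Set A} (htc : ∀ s, IsTorsionClass A (η s))
    {t s : unitInterval} (hst : s < t) {Q : A} (hQ : Q ∈ sliceP A η t) : Q ∈ η s := by
  obtain ⟨M, tM, ι, p, hM, _, _, _, hses⟩ := hQ
  exact (htc s).1 p hses.epi_g' (Set.mem_iInter₂.1 hM s hst)

lemma slice_nonzero {η : unitInterval → Set A} (htc : ∀ s, IsTorsionClass A (η s))
    {t : unitInterval} {Q : A} (hQ : Q ∈ sliceP A η t) (hz : IsZero Q) : False := by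
  obtain ⟨M, tM, ι, p, hM, hMn, htM, _, hses⟩ := hQ
  haveI hiso : IsIso ι := hses.isIso_of_isZero hz
  apply hMn
  rcases (Set.mem_union _ _ _).1 htM with h0 | hu
  · exact (Set.mem_union _ _ _).2 (Or.inl (isZero_of_epi_of_isZero ι h0))
  · obtain ⟨s, hs, hmem⟩ := Set.mem_iUnion₂.1 hu
    exact (Set.mem_union _ _ _).2
      (Or.inr (Set.mem_iUnion₂.2 ⟨s, hs, (htc s).1 ι inferInstance hmem⟩))

lemma hom_zero_into_rperp {η : unitInterval → Set A} (htc : ∀ s, IsTorsionClass A (η s))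
    {t t' : unitInterval} (h : t' < t) {Q Q' : A} (hQ : Q ∈ sliceP A η t)
    (hQ' : Q' ∈ rperp A (unionGTc A η t')) (f : Q ⟶ Q') : f = 0 := by
  obtain ⟨s, h1, h2⟩ := exists_between' h
  refine hQ' Q ((Set.mem_union _ _ _).2
    (Or.inr (Set.mem_iUnion₂.2 ⟨s, h1, slice_quot_mem htc h2 hQ⟩))) f

lemma filt_hom_zero {η : unitInterval → Set A} (htc : ∀ s, IsTorsionClass A (η s))
    {X : A} {r : ℕ} {obj : ℕ → A} {map : ∀ i, obj i ⟶ obj (i + 1)} {t : ℕ → unitInterval}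
    (hf : IsHNFiltration A η X r obj map t)
    {t' : unitInterval} (ht' : ∀ i, i < r → t' < t i) {Q' : A}
    (hQ' : Q' ∈ rperp A (unionGTc A η t')) :
    ∀ j, j ≤ r → ∀ g : obj j ⟶ Q', g = 0 := by
  intro j
  induction j with
  | zero => exact fun _ g => hf.1.eq_of_src g 0
  | succ j ih =>
    intro hj g
    obtain ⟨Q, p, hQ, hses⟩ := hf.2.2.2 j (by omega)
    obtain ⟨d, hd⟩ := hses.desc' g (ih (by omega) _)
    rw [← hd, hom_zero_into_rperp htc (ht' j (by omega)) hQ hQ' d, comp_zero]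

lemma t_min {r : ℕ} {t : ℕ → unitInterval} (hdec : ∀ i j, i < j → j < r → t j < t i)
    {i : ℕ} (hi : i < r) (hr : 1 ≤ r) : t (r - 1) ≤ t i := by
  rcases Nat.lt_or_ge i (r - 1) with h | h
  · exact (hdec i (r - 1) h (by omega)).le
  · have : i = r - 1 := by omega
    rw [this]

lemma top_mem_unionGTc {η : unitInterval → Set A} (htc : ∀ s, IsTorsionClass A (η s))
    (hzmem : ∀ s, ∀ ⦃Z : A⦄, IsZero Z → Z ∈ η s)
    {X : A} {r : ℕ} {obj : ℕ → A} {map : ∀ i, obj i ⟶ obj (i + 1)} {t : ℕ → unitInterval}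
    (hf : IsHNFiltration A η X (r + 1) obj map t) :
    obj r ∈ unionGTc A η (t r) := by
  cases r with
  | zero => exact (Set.mem_union _ _ _).2 (Or.inl hf.1)
  | succ k =>
    obtain ⟨s, hs1, hs2⟩ := exists_between' (hf.2.2.1 k (k + 1) (by omega) (by omega))
    have key : ∀ j, j ≤ k + 1 → obj j ∈ η s := by
      intro j
      induction j with
      | zero => exact fun _ => hzmem s hf.1
      | succ j ih =>
        intro hj
        obtain ⟨Q, p, hQ, hses⟩ := hf.2.2.2 j (by omega)
        have hstj : s < t j := by
          rcases Nat.lt_or_ge j k with h | h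
          · exact lt_trans hs2 (hf.2.2.1 j k h (by omega))
          · have : j = k := by omega
            rw [this]; exact hs2
        exact (htc s).2 (map j) p hses (ih (by omega)) (slice_quot_mem htc hstj hQ)
    exact (Set.mem_union _ _ _).2 (Or.inr (Set.mem_iUnion₂.2 ⟨s, hs1, key (k + 1) le_rfl⟩))

lemma sliceP_rperp {η : unitInterval → Set A} {t : unitInterval} {Q : A}
    (hQ : Q ∈ sliceP A η t) : Q ∈ rperp A (unionGTc A η t) := by
  obtain ⟨M, tM, ι, p, _, _, _, hrp, _⟩ := hQ
  exact hrp

lemma top_param_not_lt {η : unitInterval → Set A} (htc : ∀ s, IsTorsionClass A (η s))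
    {X X' : A} (e : X ≅ X') {r₁ r₂ : ℕ} {obj₁ obj₂ : ℕ → A}
    {map₁ : ∀ i, obj₁ i ⟶ obj₁ (i + 1)} {map₂ : ∀ i, obj₂ i ⟶ obj₂ (i + 1)}
    {t₁ t₂ : ℕ → unitInterval}
    (h1 : IsHNFiltration A η X (r₁ + 1) obj₁ map₁ t₁)
    (h2 : IsHNFiltration A η X' (r₂ + 1) obj₂ map₂ t₂)
    (hlt : t₂ r₂ < t₁ r₁) : False := by
  obtain ⟨Q', p', hQ', hses'⟩ := h2.2.2.2 r₂ (by omega)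
  have ht' : ∀ i, i < r₁ + 1 → t₂ r₂ < t₁ i := fun i hi =>
    lt_of_lt_of_le hlt (by simpa using t_min h1.2.2.1 hi (by omega))
  have hzero := filt_hom_zero htc h1 ht' (sliceP_rperp hQ')
    (r₁ + 1) le_rfl (eqToHom h1.2.1 ≫ e.hom ≫ eqToHom h2.2.1.symm ≫ p')
  haveI : Epi p' := hses'.epi_g'
  have hp0 : p' = 0 := by
    have := congrArg (fun z => eqToHom h2.2.1 ≫ e.inv ≫ eqToHom h1.2.1.symm ≫ z) hzero
    simpa using this
  exact slice_nonzero htc hQ' (IsZero.of_epi_eq_zero p' hp0)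

lemma uniq {η : unitInterval → Set A} (htc : ∀ s, IsTorsionClass A (η s))
    (hzmem : ∀ s, ∀ ⦃Z : A⦄, IsZero Z → Z ∈ η s) :
    ∀ (r₁ : ℕ) {X X' : A} (e : X ≅ X') (r₂ : ℕ) {obj₁ obj₂ : ℕ → A}
      {map₁ : ∀ i, obj₁ i ⟶ obj₁ (i + 1)} {map₂ : ∀ i, obj₂ i ⟶ obj₂ (i + 1)}
      {t₁ t₂ : ℕ → unitInterval}
      (_ : IsHNFiltration A η X r₁ obj₁ map₁ t₁)
      (_ : IsHNFiltration A η X' r₂ obj₂ map₂ t₂),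
      r₁ = r₂ ∧ (∀ i, i < r₁ → t₁ i = t₂ i) ∧ ∀ i, i ≤ r₁ → Nonempty (obj₁ i ≅ obj₂ i) := by
  intro r₁
  induction r₁ with
  | zero =>
    intro X X' e r₂ obj₁ obj₂ map₁ map₂ t₁ t₂ h1 h2
    have hX : IsZero X := h1.2.1 ▸ h1.1
    cases r₂ with
    | zero =>
      refine ⟨rfl, fun i hi => absurd hi (by omega), fun i hi => ?_⟩
      have : i = 0 := by omega
      subst this
      exact ⟨h1.1.iso h2.1⟩
    | succ m =>
      exfalso
      obtain ⟨Q', p', hQ', hses'⟩ := h2.2.2.2 m (by omega)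
      haveI : Epi p' := hses'.epi_g'
      have hX' : IsZero (obj₂ (m + 1)) := h2.2.1 ▸ hX.of_iso e.symm
      exact slice_nonzero htc hQ' (IsZero.of_epi_eq_zero p' (hX'.eq_of_src _ _))
  | succ k ih =>
    intro X X' e r₂ obj₁ obj₂ map₁ map₂ t₁ t₂ h1 h2
    cases r₂ with
    | zero =>
      exfalso
      have hX : IsZero X := (h2.2.1 ▸ h2.1 : IsZero X').of_iso e
      obtain ⟨Q, p, hQ, hses⟩ := h1.2.2.2 k (by omega)
      haveI : Epi p := hses.epi_g'
      have hXk : IsZero (obj₁ (k + 1)) := h1.2.1 ▸ hX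
      exact slice_nonzero htc hQ (IsZero.of_epi_eq_zero p (hXk.eq_of_src _ _))
    | succ m =>
      have hteq : t₁ k = t₂ m := by
        rcases lt_trichotomy (t₁ k) (t₂ m) with h | h | h
        · exact absurd (top_param_not_lt htc e.symm h2 h1 h) id
        · exact h
        · exact absurd (top_param_not_lt htc e h1 h2 h) id
      obtain ⟨Q₁, p₁, hQ₁, hses₁⟩ := h1.2.2.2 k (by omega)
      obtain ⟨Q₂, p₂, hQ₂, hses₂⟩ := h2.2.2.2 m (by omega)
      have hm₁ : obj₁ k ∈ unionGTc A η (t₁ k) := top_mem_unionGTc htc hzmem h1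
      have hm₂ : obj₂ m ∈ unionGTc A η (t₂ m) := top_mem_unionGTc htc hzmem h2
      have hrp₁ := sliceP_rperp hQ₁
      have hrp₂ := sliceP_rperp hQ₂
      set w : obj₁ (k + 1) ⟶ obj₂ (m + 1) :=
        eqToHom h1.2.1 ≫ e.hom ≫ eqToHom h2.2.1.symm with hwdef
      set w' : obj₂ (m + 1) ⟶ obj₁ (k + 1) :=
        eqToHom h2.2.1 ≫ e.inv ≫ eqToHom h1.2.1.symm with hw'def
      have hww' : w ≫ w' = 𝟙 _ := by simp [hwdef, hw'def]
      have hw'w : w' ≫ w = 𝟙 _ := by simp [hwdef, hw'def]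
      obtain ⟨u, hu⟩ := hses₁.lift' (map₂ m ≫ w')
        (hrp₁ _ (hteq ▸ hm₂) _)
      obtain ⟨v, hv⟩ := hses₂.lift' (map₁ k ≫ w)
        (hrp₂ _ (hteq ▸ hm₁) _)
      haveI hmono₁ : Mono (map₁ k) := hses₁.mono_f'
      haveI hmono₂ : Mono (map₂ m) := hses₂.mono_f'
      have hvu : v ≫ u = 𝟙 _ := by
        rw [← cancel_mono (map₁ k), Category.assoc, hu, ← Category.assoc, hv,
          Category.assoc, hww', Category.comp_id, Category.id_comp]
      have huv : u ≫ v = 𝟙 _ := by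
        rw [← cancel_mono (map₂ m), Category.assoc, hv, ← Category.assoc, hu,
          Category.assoc, hw'w, Category.comp_id, Category.id_comp]
      have etop : obj₁ k ≅ obj₂ m := ⟨v, u, hvu, huv⟩
      have h1' : IsHNFiltration A η (obj₁ k) k obj₁ map₁ t₁ :=
        ⟨h1.1, rfl, fun i j hij hj => h1.2.2.1 i j hij (by omega),
          fun i hi => h1.2.2.2 i (by omega)⟩
      have h2' : IsHNFiltration A η (obj₂ m) m obj₂ map₂ t₂ :=
        ⟨h2.1, rfl, fun i j hij hj => h2.2.2.1 i j hij (by omega),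
          fun i hi => h2.2.2.2 i (by omega)⟩
      obtain ⟨hrm, hts, hisos⟩ := ih etop m h1' h2'
      subst hrm
      refine ⟨rfl, fun i hi => ?_, fun i hi => ?_⟩
      · rcases Nat.lt_or_ge i k with h | h
        · exact hts i h
        · have : i = k := by omega
          subst this
          exact hteq
      · rcases Nat.lt_or_ge i (k + 1) with h | h
        · exact hisos i (by omega)
        · have : i = k + 1 := by omega
          subst this
          exact ⟨eqToIso h1.2.1 ≪≫ e ≪≫ (eqToIso h2.2.1).symm⟩

end AuxProof3
/-- Theorem 6.2. For `X ∈ MM`, the `n`-Harder-Narasimhan filtration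
of `X` with respect to a chain `δ` of `n`-torsion classes of `MM` coincides, term by
term up to isomorphism and with equal length and equal parameters, with the
Harder-Narasimhan filtration of `X` with respect to the induced chain of torsion
classes `T(δ) = {T(U_s)}` of `A`. -/
theorem n_hn_filtration_eq_hn_filtration
    [HasExt.{w} A] [EssentiallySmall.{v} A] (hlen : IsLengthCategory A)
    (n : ℕ) (hn : 1 ≤ n) (MM : Set A) (hM : IsNClusterTilting A n MM)
    (δ : unitInterval → Set A) (hδ : IsChainOfNTorsionClasses A n MM δ)
    (X : A) (hX : X ∈ MM)
    (r₁ r₂ : ℕ) (obj₁ obj₂ : ℕ → A)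
    (map₁ : ∀ i, obj₁ i ⟶ obj₁ (i + 1)) (map₂ : ∀ i, obj₂ i ⟶ obj₂ (i + 1))
    (t₁ t₂ : ℕ → unitInterval)
    (h₁ : IsNHNFiltration A n MM δ X r₁ obj₁ map₁ t₁)
    (h₂ : IsHNFiltration A (fun s => TT A (δ s)) X r₂ obj₂ map₂ t₂) :
    r₁ = r₂ ∧ (∀ i, i < r₁ → t₁ i = t₂ i) ∧
      ∀ i, i ≤ r₁ → Nonempty (obj₁ i ≅ obj₂ i) := by
  haveI := hn
  -- every `δ s` is nonempty, since `X ∈ MM` has a fundamental sequence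
  have hne : ∀ s : unitInterval, ∃ W, W ∈ δ s := by
    intro s
    obtain ⟨Sq, hSq⟩ := (hδ.1 s).2 X hX
    exact ⟨Sq.obj 1, hSq.2.2.1⟩
  have htc : ∀ s, IsTorsionClass A ((fun s => TT A (δ s)) s) :=
    fun s => TT_isTorsionClass (δ s)
  have hzmem : ∀ s, ∀ ⦃Z : A⦄, IsZero Z → Z ∈ (fun s => TT A (δ s)) s := by
    intro s Z hZ
    obtain ⟨W, hW⟩ := hne s
    exact zero_mem_of_nonempty (TT_isTorsionClass (δ s)) (TT_subset _ hW) hZ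
  exact uniq htc hzmem r₁ (Iso.refl X) r₂ (bridge hn h₁) h₂

end TorsionPaper
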